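/- Let μ be a probability measure supported on the unit ball of H and let D = { x ↦ ‖x‖² − ‖U U* x‖² : U ∈ 𝒰(ℝ^K, H) } be the class of reconstruction errors of K-dimensional principal component analysis. Then R_m(D, μ) ≤ 2 √(K/m). -/

import Mathlib

open MeasureTheory

/-- The Rademacher complexity `R_m(F, μ) = (2/m) E_{x∼μ^m} E_σ sup_{f ∈ F} Σ_i σ_i f(x_i)`,
where the expectation over the i.i.d. uniform signs `σ` is written as a normalized sum over
all sign patterns `ε : Fin m → Bool`. -/
noncomputable def rademacher {X : Type*} [MeasurableSpace X] (m : ℕ)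
    (F : Set (X → ℝ)) (μ : Measure X) : ℝ :=
  (2 / m) * ∫ x : Fin m → X,
    (∑ ε : Fin m → Bool,
        sSup ((fun f : X → ℝ => ∑ i, (if ε i then (1 : ℝ) else -1) * f (x i)) '' F)) / 2 ^ m
    ∂(Measure.pi fun _ => μ)

section Aux
set_option linter.unusedSectionVars false
open Finset
open scoped RealInnerProductSpace
variable {H : Type*} [NormedAddCommGroup H] [InnerProductSpace ℝ H] [CompleteSpace H]

theorem gram_nonneg {ι : Type*} [Fintype ι] (a : ι → ℝ) (y : ι → H) :
    0 ≤ ∑ i, ∑ j, a i * a j * ⟪y i, y j⟫ := by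
  have h : (⟪∑ i, a i • y i, ∑ j, a j • y j⟫) = ∑ i, ∑ j, a i * a j * ⟪y i, y j⟫ := by
    simp only [sum_inner, inner_sum, real_inner_smul_left, real_inner_smul_right, Finset.mul_sum,
      mul_assoc]
    exact Finset.sum_congr rfl fun i _ => Finset.sum_congr rfl fun j _ => by
      rw [real_inner_comm]
  rw [← h]; exact real_inner_self_nonneg

theorem schur_nonneg {ι : Type*} [Fintype ι] (c : ι → ℝ) (y w : ι → H) :
    0 ≤ ∑ i, ∑ j, c i * c j * (⟪y i, y j⟫ * ⟪w i, w j⟫) := by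
  classical
  set F := Submodule.span ℝ (Set.range w) with hF
  haveI : FiniteDimensional ℝ F := FiniteDimensional.span_of_finite ℝ (Set.finite_range w)
  set b := stdOrthonormalBasis ℝ F with hb
  have hw : ∀ i, w i ∈ F := fun i => Submodule.subset_span (Set.mem_range_self i)
  set w' : ι → F := fun i => ⟨w i, hw i⟩ with hw'
  set d : ι → Fin (Module.finrank ℝ F) → ℝ := fun i t => ⟪w' i, b t⟫ with hd
  have hinner : ∀ i j, ⟪w i, w j⟫ = ∑ t, d i t * d j t := by
    intro i j
    have h1 : ⟪w i, w j⟫ = ⟪w' i, w' j⟫ := (Submodule.coe_inner F (w' i) (w' j)).symm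
    rw [h1, ← b.sum_inner_mul_inner (w' i) (w' j)]
    exact Finset.sum_congr rfl fun t _ => by rw [real_inner_comm (w' j) (b t)]
  have key : ∑ i, ∑ j, c i * c j * (⟪y i, y j⟫ * ⟪w i, w j⟫)
      = ∑ t, ∑ i, ∑ j, (c i * d i t) * (c j * d j t) * ⟪y i, y j⟫ := by
    calc ∑ i, ∑ j, c i * c j * (⟪y i, y j⟫ * ⟪w i, w j⟫)
        = ∑ i, ∑ j, ∑ t, (c i * d i t) * (c j * d j t) * ⟪y i, y j⟫ := by
          refine Finset.sum_congr rfl fun i _ => Finset.sum_congr rfl fun j _ => ?_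
          rw [hinner i j, Finset.mul_sum, Finset.mul_sum]
          exact Finset.sum_congr rfl fun t _ => by ring
      _ = ∑ i, ∑ t, ∑ j, (c i * d i t) * (c j * d j t) * ⟪y i, y j⟫ :=
          Finset.sum_congr rfl fun i _ => Finset.sum_comm
      _ = ∑ t, ∑ i, ∑ j, (c i * d i t) * (c j * d j t) * ⟪y i, y j⟫ := Finset.sum_comm
  rw [key]
  exact Finset.sum_nonneg fun t _ => gram_nonneg _ _

theorem perU {K m : ℕ} (x : Fin m → H) (s : Fin m → ℝ)
    (U : EuclideanSpace ℝ (Fin K) →ₗᵢ[ℝ] H) :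
    ∑ i, s i * (‖x i‖ ^ 2 -
        ‖U.toContinuousLinearMap (ContinuousLinearMap.adjoint U.toContinuousLinearMap (x i))‖ ^ 2)
      ≤ ∑ i, s i * ‖x i‖ ^ 2
        + Real.sqrt K * Real.sqrt (∑ i, ∑ j, s i * s j * ⟪x i, x j⟫ ^ 2) := by
  classical
  set T := U.toContinuousLinearMap with hT
  set A := ContinuousLinearMap.adjoint T with hA
  set a : Fin m → Fin K → ℝ := fun i k => A (x i) k with ha
  set Q := ∑ i, ∑ j, s i * s j * ⟪x i, x j⟫ ^ 2 with hQ
  have hQ0 : 0 ≤ Q := by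
    have h := schur_nonneg s x x
    have : ∑ i, ∑ j, s i * s j * (⟪x i, x j⟫ * ⟪x i, x j⟫) = Q :=
      Finset.sum_congr rfl fun i _ => Finset.sum_congr rfl fun j _ => by ring
    linarith [this ▸ h]
  have hnorm : ∀ i, ‖T (A (x i))‖ ^ 2 = ∑ k, a i k ^ 2 := by
    intro i
    have h1 : ‖T (A (x i))‖ = ‖A (x i)‖ := U.norm_map _
    rw [h1, EuclideanSpace.norm_eq, Real.sq_sqrt (by positivity)]
    exact Finset.sum_congr rfl fun k _ => by rw [Real.norm_eq_abs, sq_abs]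
  set b : Fin K → ℝ := fun k => ∑ i, s i * a i k ^ 2 with hbdef
  have hsplit : ∑ i, s i * (‖x i‖ ^ 2 - ‖T (A (x i))‖ ^ 2)
      = ∑ i, s i * ‖x i‖ ^ 2 - ∑ k, b k := by
    have h1 : ∀ i, s i * (‖x i‖ ^ 2 - ‖T (A (x i))‖ ^ 2)
        = s i * ‖x i‖ ^ 2 - ∑ k, s i * a i k ^ 2 := fun i => by
      rw [hnorm i, mul_sub, Finset.mul_sum]
    rw [Finset.sum_congr rfl fun i _ => h1 i, Finset.sum_sub_distrib]
    congr 1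
    exact Finset.sum_comm
  rw [hsplit]
  suffices hsuff : -∑ k, b k ≤ Real.sqrt K * Real.sqrt Q by linarith
  -- auxiliary vectors
  set u : Fin K → H := fun k => U (EuclideanSpace.single k 1) with hu
  set v : Fin K → H := fun k => ∑ i, (s i * a i k) • x i with hv
  have hax : ∀ i k, ⟪x i, u k⟫ = a i k := by
    intro i k
    calc ⟪x i, u k⟫ = ⟪A (x i), EuclideanSpace.single k (1:ℝ)⟫ :=
          (ContinuousLinearMap.adjoint_inner_left T _ _).symm
      _ = a i k := by simp [EuclideanSpace.inner_single_right]; rfl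
  have hbk : ∀ k, b k = ⟪v k, u k⟫ := by
    intro k
    rw [hv]
    simp only [sum_inner, real_inner_smul_left]
    exact Finset.sum_congr rfl fun i _ => by rw [hax i k]; ring
  have hunorm : ∀ k, ‖u k‖ = 1 := by
    intro k
    rw [hu]
    simp only [LinearIsometry.norm_map]
    simp [EuclideanSpace.norm_single]
  have hb_le : ∀ k, b k ^ 2 ≤ ‖v k‖ ^ 2 := by
    intro k
    have h := abs_real_inner_le_norm (v k) (u k)
    rw [hunorm k, mul_one] at h
    rw [hbk k]
    calc ⟪v k, u k⟫ ^ 2 = |⟪v k, u k⟫| ^ 2 := (sq_abs _).symm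
      _ ≤ ‖v k‖ ^ 2 := by nlinarith [abs_nonneg (⟪v k, u k⟫), norm_nonneg (v k)]
  have hAinner : ∀ i j, ⟪A (x i), A (x j)⟫ = ∑ k, a i k * a j k := by
    intro i j
    simp [PiLp.inner_apply, RCLike.inner_apply]
    exact Finset.sum_congr rfl fun k _ => mul_comm _ _
  have hvsum : ∑ k, ‖v k‖ ^ 2
      = ∑ i, ∑ j, s i * s j * (⟪x i, x j⟫ * ⟪A (x i), A (x j)⟫) := by
    have h1 : ∀ k, ‖v k‖ ^ 2 = ∑ i, ∑ j, (s i * a i k) * (s j * a j k) * ⟪x i, x j⟫ := by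
      intro k
      rw [← real_inner_self_eq_norm_sq, hv]
      simp only [sum_inner, inner_sum, real_inner_smul_left, real_inner_smul_right]
      exact Finset.sum_congr rfl fun i _ => Finset.sum_congr rfl fun j _ => by
        rw [real_inner_comm (x j) (x i)]; ring
    calc ∑ k, ‖v k‖ ^ 2
        = ∑ k, ∑ i, ∑ j, (s i * a i k) * (s j * a j k) * ⟪x i, x j⟫ :=
          Finset.sum_congr rfl fun k _ => h1 k
      _ = ∑ i, ∑ k, ∑ j, (s i * a i k) * (s j * a j k) * ⟪x i, x j⟫ := Finset.sum_comm
      _ = ∑ i, ∑ j, ∑ k, (s i * a i k) * (s j * a j k) * ⟪x i, x j⟫ :=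
          Finset.sum_congr rfl fun i _ => Finset.sum_comm
      _ = ∑ i, ∑ j, s i * s j * (⟪x i, x j⟫ * ⟪A (x i), A (x j)⟫) := by
          refine Finset.sum_congr rfl fun i _ => Finset.sum_congr rfl fun j _ => ?_
          rw [hAinner i j, Finset.mul_sum, Finset.mul_sum]
          exact Finset.sum_congr rfl fun k _ => by ring
  have hSchur : ∑ i, ∑ j, s i * s j * (⟪x i, x j⟫ * ⟪A (x i), A (x j)⟫) ≤ Q := by
    set w : Fin m → H := fun i => x i - T (A (x i)) with hwdef
    have hw : ∀ i j, ⟪w i, w j⟫ = ⟪x i, x j⟫ - ⟪A (x i), A (x j)⟫ := by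
      intro i j
      have e1 : ⟪x i, T (A (x j))⟫ = ⟪A (x i), A (x j)⟫ :=
        (ContinuousLinearMap.adjoint_inner_left T _ _).symm
      have e1' : ⟪x j, T (A (x i))⟫ = ⟪A (x j), A (x i)⟫ :=
        (ContinuousLinearMap.adjoint_inner_left T _ _).symm
      have e2 : ⟪T (A (x i)), x j⟫ = ⟪A (x i), A (x j)⟫ := by
        rw [real_inner_comm, e1', real_inner_comm]
      have e3 : ⟪T (A (x i)), T (A (x j))⟫ = ⟪A (x i), A (x j)⟫ := U.inner_map_map _ _
      rw [hwdef]
      simp only [inner_sub_left, inner_sub_right]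
      rw [e1, e2, e3]; ring
    have h0 := schur_nonneg s x w
    have heq : ∑ i, ∑ j, s i * s j * (⟪x i, x j⟫ * ⟪w i, w j⟫)
        = Q - ∑ i, ∑ j, s i * s j * (⟪x i, x j⟫ * ⟪A (x i), A (x j)⟫) := by
      rw [hQ, ← Finset.sum_sub_distrib]
      refine Finset.sum_congr rfl fun i _ => ?_
      rw [← Finset.sum_sub_distrib]
      refine Finset.sum_congr rfl fun j _ => ?_
      rw [hw i j]; ring
    linarith [heq ▸ h0]
  have hbQ : ∑ k, b k ^ 2 ≤ Q := by
    calc ∑ k, b k ^ 2 ≤ ∑ k, ‖v k‖ ^ 2 := Finset.sum_le_sum fun k _ => hb_le k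
      _ = _ := hvsum
      _ ≤ Q := hSchur
  have habs : (∑ k, b k) ^ 2 ≤ (K : ℝ) * Q := by
    have h := sq_sum_le_card_mul_sum_sq (s := (univ : Finset (Fin K))) (f := b)
    simp only [Finset.card_univ, Fintype.card_fin] at h
    have h2 : (K : ℝ) * ∑ k, b k ^ 2 ≤ (K : ℝ) * Q :=
      mul_le_mul_of_nonneg_left hbQ (by positivity)
    linarith
  calc -∑ k, b k ≤ |∑ k, b k| := neg_le_abs _
    _ = Real.sqrt ((∑ k, b k) ^ 2) := (Real.sqrt_sq_eq_abs _).symm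
    _ ≤ Real.sqrt ((K : ℝ) * Q) := Real.sqrt_le_sqrt habs
    _ = Real.sqrt K * Real.sqrt Q := Real.sqrt_mul (by positivity) _

theorem sum_sign_single (m : ℕ) (i : Fin m) :
    ∑ ε : Fin m → Bool, (if ε i then (1:ℝ) else -1) = 0 := by
  classical
  refine Finset.sum_ninvolution (fun ε => Function.update ε i (!ε i)) ?_ ?_ (by simp) ?_
  · intro ε
    by_cases h : ε i <;> simp [h, Function.update_self]
  · intro ε _ hne
    have := congrFun hne i
    simp [Function.update_self] at this
  · intro ε
    funext j
    by_cases hj : j = i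
    · subst hj; simp
    · simp [Function.update_of_ne hj]

theorem sum_sign_pair (m : ℕ) {i j : Fin m} (hij : i ≠ j) :
    ∑ ε : Fin m → Bool,
      (if ε i then (1:ℝ) else -1) * (if ε j then (1:ℝ) else -1) = 0 := by
  classical
  refine Finset.sum_ninvolution (fun ε => Function.update ε i (!ε i)) ?_ ?_ (by simp) ?_
  · intro ε
    by_cases h : ε i <;> by_cases h' : ε j <;>
      simp [h, h', Function.update_of_ne (Ne.symm hij), Function.update_self]
  · intro ε _ hne
    have := congrFun hne i
    simp [Function.update_self] at this
  · intro ε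
    funext k
    by_cases hk : k = i
    · subst hk; simp
    · simp [Function.update_of_ne hk]

theorem sum_sign_mul (m : ℕ) (i j : Fin m) :
    ∑ ε : Fin m → Bool,
      (if ε i then (1:ℝ) else -1) * (if ε j then (1:ℝ) else -1)
      = if i = j then (2:ℝ)^m else 0 := by
  by_cases h : i = j
  · subst h
    simp only [if_pos rfl]
    have : ∀ ε : Fin m → Bool, (if ε i then (1:ℝ) else -1) * (if ε i then (1:ℝ) else -1) = 1 := by
      intro ε; by_cases hb : ε i <;> simp [hb]
    rw [Finset.sum_congr rfl fun ε _ => this ε]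
    simp [Finset.card_univ]
  · rw [if_neg h]
    exact sum_sign_pair m h

open scoped RealInnerProductSpace in
theorem avg_bound {K m : ℕ}
    [Nonempty (EuclideanSpace ℝ (Fin K) →ₗᵢ[ℝ] H)]
    (x : Fin m → H) (hx : ∀ i, ‖x i‖ ≤ 1) :
    (∑ ε : Fin m → Bool,
        sSup ((fun f : H → ℝ => ∑ i, (if ε i then (1:ℝ) else -1) * f (x i)) ''
          ((fun U : EuclideanSpace ℝ (Fin K) →ₗᵢ[ℝ] H =>
              fun x : H => ‖x‖ ^ 2 - ‖U.toContinuousLinearMap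
                (ContinuousLinearMap.adjoint U.toContinuousLinearMap x)‖ ^ 2) ''
            Set.univ))) / 2 ^ m
      ≤ Real.sqrt K * Real.sqrt m := by
  classical
  set sQ : (Fin m → Bool) → ℝ := fun ε => ∑ i, ∑ j,
    (if ε i then (1:ℝ) else -1) * (if ε j then (1:ℝ) else -1) * ⟪x i, x j⟫ ^ 2 with hsQ
  have hsup : ∀ ε : Fin m → Bool,
      sSup ((fun f : H → ℝ => ∑ i, (if ε i then (1:ℝ) else -1) * f (x i)) ''
          ((fun U : EuclideanSpace ℝ (Fin K) →ₗᵢ[ℝ] H =>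
              fun x : H => ‖x‖ ^ 2 - ‖U.toContinuousLinearMap
                (ContinuousLinearMap.adjoint U.toContinuousLinearMap x)‖ ^ 2) '' Set.univ))
        ≤ (∑ i, (if ε i then (1:ℝ) else -1) * ‖x i‖ ^ 2)
          + Real.sqrt K * Real.sqrt (sQ ε) := by
    intro ε
    rw [Set.image_image, Set.image_univ]
    refine csSup_le (Set.range_nonempty _) ?_
    rintro r ⟨U, rfl⟩
    exact perU x _ U
  have hQ0 : ∀ ε, 0 ≤ sQ ε := by
    intro ε
    have h := schur_nonneg (fun i => if ε i then (1:ℝ) else -1) x x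
    have e : ∑ i, ∑ j, (if ε i then (1:ℝ) else -1) * (if ε j then (1:ℝ) else -1)
        * (⟪x i, x j⟫ * ⟪x i, x j⟫) = sQ ε :=
      Finset.sum_congr rfl fun i _ => Finset.sum_congr rfl fun j _ => by ring
    linarith [e ▸ h]
  have hQsum : ∑ ε, sQ ε ≤ (2:ℝ) ^ m * m := by
    have h1 : ∑ ε, sQ ε = ∑ i, ∑ j,
        (∑ ε : Fin m → Bool, (if ε i then (1:ℝ) else -1) * (if ε j then (1:ℝ) else -1))
          * ⟪x i, x j⟫ ^ 2 := by
      rw [hsQ, Finset.sum_comm]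
      refine Finset.sum_congr rfl fun i _ => ?_
      rw [Finset.sum_comm]
      refine Finset.sum_congr rfl fun j _ => ?_
      rw [Finset.sum_mul]
    rw [h1]
    calc ∑ i, ∑ j, (∑ ε : Fin m → Bool,
            (if ε i then (1:ℝ) else -1) * (if ε j then (1:ℝ) else -1)) * ⟪x i, x j⟫ ^ 2
        = ∑ i : Fin m, (2:ℝ) ^ m * ⟪x i, x i⟫ ^ 2 := by
          refine Finset.sum_congr rfl fun i _ => ?_
          rw [Finset.sum_eq_single i]
          · rw [sum_sign_mul, if_pos rfl]
          · intro j _ hji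
            rw [sum_sign_mul, if_neg (Ne.symm hji), zero_mul]
          · intro hi; exact absurd (Finset.mem_univ i) hi
      _ ≤ ∑ i : Fin m, (2:ℝ) ^ m * 1 := by
          refine Finset.sum_le_sum fun i _ => ?_
          have h2 : ⟪x i, x i⟫ = ‖x i‖ ^ 2 := real_inner_self_eq_norm_sq _
          have h3 : ⟪x i, x i⟫ ^ 2 ≤ 1 := by
            rw [h2]
            have h4 : ‖x i‖ ^ 2 ≤ 1 := by nlinarith [norm_nonneg (x i), hx i]
            exact pow_le_one₀ (by positivity) h4
          exact mul_le_mul_of_nonneg_left h3 (by positivity)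
      _ = (2:ℝ) ^ m * m := by
          rw [Finset.sum_const, Finset.card_univ, Fintype.card_fin]
          simp [mul_comm]
  have hsqrt : ∑ ε, Real.sqrt (sQ ε) ≤ (2:ℝ) ^ m * Real.sqrt m := by
    have h0 : 0 ≤ ∑ ε, Real.sqrt (sQ ε) :=
      Finset.sum_nonneg fun ε _ => Real.sqrt_nonneg _
    have hcard : ((Finset.univ : Finset (Fin m → Bool)).card : ℝ) = 2 ^ m := by
      rw [Finset.card_univ]
      simp [Fintype.card_fun]
    have h1 : (∑ ε, Real.sqrt (sQ ε)) ^ 2 ≤ (2:ℝ) ^ m * ((2:ℝ) ^ m * m) := by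
      have h2 := sq_sum_le_card_mul_sum_sq (s := (Finset.univ : Finset (Fin m → Bool)))
        (f := fun ε => Real.sqrt (sQ ε))
      rw [hcard] at h2
      have h3 : ∑ ε, Real.sqrt (sQ ε) ^ 2 = ∑ ε, sQ ε :=
        Finset.sum_congr rfl fun ε _ => Real.sq_sqrt (hQ0 ε)
      rw [h3] at h2
      calc (∑ ε, Real.sqrt (sQ ε)) ^ 2 ≤ (2:ℝ) ^ m * ∑ ε, sQ ε := h2
        _ ≤ (2:ℝ) ^ m * ((2:ℝ) ^ m * m) :=
            mul_le_mul_of_nonneg_left hQsum (by positivity)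
    calc ∑ ε, Real.sqrt (sQ ε) = Real.sqrt ((∑ ε, Real.sqrt (sQ ε)) ^ 2) :=
          (Real.sqrt_sq h0).symm
      _ ≤ Real.sqrt ((2:ℝ) ^ m * ((2:ℝ) ^ m * m)) := Real.sqrt_le_sqrt h1
      _ = (2:ℝ) ^ m * Real.sqrt m := by
          rw [show (2:ℝ) ^ m * ((2:ℝ) ^ m * m) = ((2:ℝ) ^ m) ^ 2 * m by ring,
            Real.sqrt_mul (by positivity), Real.sqrt_sq (by positivity)]
  have hL : ∑ ε : Fin m → Bool, ∑ i, (if ε i then (1:ℝ) else -1) * ‖x i‖ ^ 2 = 0 := by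
    rw [Finset.sum_comm]
    refine Finset.sum_eq_zero fun i _ => ?_
    rw [← Finset.sum_mul, sum_sign_single, zero_mul]
  rw [div_le_iff₀ (by positivity : (0:ℝ) < 2 ^ m)]
  calc (∑ ε : Fin m → Bool, sSup _)
      ≤ ∑ ε : Fin m → Bool, ((∑ i, (if ε i then (1:ℝ) else -1) * ‖x i‖ ^ 2)
          + Real.sqrt K * Real.sqrt (sQ ε)) := Finset.sum_le_sum fun ε _ => hsup ε
    _ = (∑ ε : Fin m → Bool, ∑ i, (if ε i then (1:ℝ) else -1) * ‖x i‖ ^ 2)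
          + Real.sqrt K * ∑ ε, Real.sqrt (sQ ε) := by
        rw [Finset.sum_add_distrib, Finset.mul_sum]
    _ = Real.sqrt K * ∑ ε, Real.sqrt (sQ ε) := by rw [hL, zero_add]
    _ ≤ Real.sqrt K * ((2:ℝ) ^ m * Real.sqrt m) :=
        mul_le_mul_of_nonneg_left hsqrt (Real.sqrt_nonneg _)
    _ = Real.sqrt K * Real.sqrt m * 2 ^ m := by ring

end Aux

theorem stmt12 {H : Type*} [NormedAddCommGroup H] [InnerProductSpace ℝ H] [CompleteSpace H]
    [MeasurableSpace H] [BorelSpace H]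
    {K m : ℕ} (hK : 1 ≤ K) (hm : 1 ≤ m)
    (μ : Measure H) [IsProbabilityMeasure μ] (hμ : ∀ᵐ x ∂μ, ‖x‖ ≤ 1) :
    rademacher m
      ((fun U : EuclideanSpace ℝ (Fin K) →ₗᵢ[ℝ] H =>
          fun x : H => ‖x‖ ^ 2 -
            ‖U.toContinuousLinearMap
              (ContinuousLinearMap.adjoint U.toContinuousLinearMap x)‖ ^ 2) '' Set.univ) μ ≤
      2 * Real.sqrt (K / m) := by
  classical
  have hm0 : (0:ℝ) < m := by exact_mod_cast Nat.lt_of_lt_of_le Nat.zero_lt_one hm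
  rcases isEmpty_or_nonempty (EuclideanSpace ℝ (Fin K) →ₗᵢ[ℝ] H) with hE | hNE
  · rw [rademacher]
    have himg : ((fun U : EuclideanSpace ℝ (Fin K) →ₗᵢ[ℝ] H =>
        fun x : H => ‖x‖ ^ 2 -
          ‖U.toContinuousLinearMap
            (ContinuousLinearMap.adjoint U.toContinuousLinearMap x)‖ ^ 2) '' Set.univ) = ∅ := by
      rw [Set.univ_eq_empty_iff.mpr hE, Set.image_empty]
    rw [himg]
    simp only [Set.image_empty, Real.sSup_empty, Finset.sum_const, smul_zero, zero_div,
      integral_zero, mul_zero]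
    positivity
  · haveI := hNE
    rw [rademacher]
    have hae : ∀ᵐ x ∂(Measure.pi fun _ : Fin m => μ), ∀ i, ‖x i‖ ≤ 1 :=
      (Filter.eventually_pi fun _ : Fin m => hμ).filter_mono Measure.ae_pi_le_pi
    have hInt : (∫ x : Fin m → H,
        (∑ ε : Fin m → Bool,
          sSup ((fun f : H → ℝ => ∑ i, (if ε i then (1 : ℝ) else -1) * f (x i)) ''
            ((fun U : EuclideanSpace ℝ (Fin K) →ₗᵢ[ℝ] H =>
                fun x : H => ‖x‖ ^ 2 -
                  ‖U.toContinuousLinearMap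
                    (ContinuousLinearMap.adjoint U.toContinuousLinearMap x)‖ ^ 2) ''
              Set.univ))) / 2 ^ m ∂(Measure.pi fun _ => μ))
        ≤ Real.sqrt K * Real.sqrt m := by
      set g : (Fin m → H) → ℝ := fun x =>
        (∑ ε : Fin m → Bool,
          sSup ((fun f : H → ℝ => ∑ i, (if ε i then (1 : ℝ) else -1) * f (x i)) ''
            ((fun U : EuclideanSpace ℝ (Fin K) →ₗᵢ[ℝ] H =>
                fun x : H => ‖x‖ ^ 2 -
                  ‖U.toContinuousLinearMap
                    (ContinuousLinearMap.adjoint U.toContinuousLinearMap x)‖ ^ 2) ''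
              Set.univ))) / 2 ^ m with hg
      by_cases hI : Integrable g (Measure.pi fun _ : Fin m => μ)
      · have hgle : ∀ᵐ x ∂(Measure.pi fun _ : Fin m => μ),
            g x ≤ Real.sqrt K * Real.sqrt m :=
          hae.mono fun x hx => avg_bound x hx
        calc ∫ x, g x ∂(Measure.pi fun _ : Fin m => μ)
            ≤ ∫ _, Real.sqrt K * Real.sqrt m ∂(Measure.pi fun _ : Fin m => μ) :=
              integral_mono_ae hI (integrable_const _) hgle
          _ = Real.sqrt K * Real.sqrt m := by simp [measure_univ]
      · rw [integral_undef hI]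
        positivity
    have harith : (2 / (m:ℝ)) * (Real.sqrt K * Real.sqrt m) = 2 * Real.sqrt ((K:ℝ) / m) := by
      rw [Real.sqrt_div (Nat.cast_nonneg K)]
      have hsm : (0:ℝ) < Real.sqrt m := Real.sqrt_pos.mpr hm0
      have hmm : Real.sqrt m * Real.sqrt m = (m:ℝ) := Real.mul_self_sqrt hm0.le
      field_simp
      linear_combination hmm
    calc (2 / (m:ℝ)) * _ ≤ (2 / (m:ℝ)) * (Real.sqrt K * Real.sqrt m) :=
          mul_le_mul_of_nonneg_left hInt (by positivity)
      _ = 2 * Real.sqrt ((K:ℝ) / m) := harith
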